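/- Let q be a prime power and L ⊆ {0,1,…,q−1} with |L| = s. Let F ⊆ 2^[n] be a family such that no |A| for A ∈ F is congruent modulo q to an element of L, while |A ∩ B| is congruent modulo q to some element of L for every pair of distinct A, B ∈ F. Then |F| ≤ Σ_{i=0}^{q−1} C(n, i). -/

import Mathlib

open Finset

section
variable {p k : ℕ}

private lemma fac_lt {c : ℕ} (hc : c ≠ 0) (hck : c < p ^ k) : c.factorization p < k := by
  by_contra h
  push_neg at h
  have h1 : p ^ k ∣ c := dvd_trans (pow_dvd_pow p h) (Nat.ordProj_dvd c p)
  exact absurd (Nat.le_of_dvd (Nat.pos_of_ne_zero hc) h1) (not_le.mpr hck)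

private lemma mod_formula {q l : ℕ} (hl : l < q) :
    ∀ b, b < q → (l + q - b) % q = if b ≤ l then l - b else l + q - b := by
  intro b hb
  split_ifs with h
  · have e : l + q - b = (l - b) + q := by omega
    rw [e, Nat.add_mod_right, Nat.mod_eq_of_lt (by omega)]
  · exact Nat.mod_eq_of_lt (by omega)

private lemma mod_helper {q l a : ℕ} (hl : l < q) (ha : a < q) (hne : a ≠ l) :
    (l + q - a) % q ≠ 0 ∧ (l + q - a) % q < q ∧ (l + q - ((l + q - a) % q)) % q = a := by
  have h1 := mod_formula hl a ha
  rcases le_or_gt a l with h | h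
  · rw [h1]; simp only [if_pos h]
    rw [mod_formula hl (l - a) (by omega), if_pos (by omega)]
    exact ⟨by omega, by omega, by omega⟩
  · rw [h1]; simp only [if_neg (by omega : ¬ a ≤ l)]
    rw [mod_formula hl (l + q - a) (by omega), if_neg (by omega)]
    exact ⟨by omega, by omega, by omega⟩

private lemma sum_val_bij {q : ℕ} (hq : 0 < q) {l : ℕ} (hl : l < q) (f : ℕ → ℕ) :
    ∑ j ∈ (range q).erase l, f ((l + q - j) % q) = ∑ c ∈ (range q).erase 0, f c := by
  refine Finset.sum_nbij' (i := fun j => (l + q - j) % q) (j := fun c => (l + q - c) % q)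
    ?_ ?_ ?_ ?_ ?_
  · intro a ha
    simp only [mem_erase, mem_range] at ha ⊢
    obtain ⟨h1, h2, _⟩ := mod_helper hl ha.2 ha.1
    exact ⟨h1, h2⟩
  · intro a ha
    simp only [mem_erase, mem_range] at ha ⊢
    rw [mod_formula hl a ha.2]
    split_ifs with h
    · exact ⟨by omega, by omega⟩
    · exact ⟨by omega, by omega⟩
  · intro a ha
    simp only [mem_erase, mem_range] at ha
    exact (mod_helper hl ha.2 ha.1).2.2
  · intro a ha
    simp only [mem_erase, mem_range] at ha
    show (l + q - ((l + q - a) % q)) % q = a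
    rw [mod_formula hl a ha.2]
    split_ifs with h
    · rw [mod_formula hl (l - a) (by omega), if_pos (by omega)]; omega
    · rw [mod_formula hl (l + q - a) (by omega), if_neg (by omega)]; omega
  · intro a ha
    rfl

private lemma val_factor (hp : p.Prime) {x : ℤ} {c : ℕ}
    (hc0 : c ≠ 0) (hcq : c < p ^ k) (hmod : ((p : ℤ) ^ k) ∣ x - c) :
    ∃ w : ℤ, x = (p : ℤ) ^ (c.factorization p) * w ∧ ¬ (p : ℤ) ∣ w := by
  set v := c.factorization p with hv
  have hvk : v < k := fac_lt hc0 hcq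
  obtain ⟨m, hm⟩ := hmod
  obtain ⟨d, hdc⟩ := Nat.ordProj_dvd c p
  have hpd : ¬ p ∣ d := by
    intro hdvd
    have h2 : p ^ (v + 1) ∣ c := by rw [hdc, pow_succ]; exact mul_dvd_mul_left _ hdvd
    have := (Nat.Prime.pow_dvd_iff_le_factorization hp hc0).mp h2
    omega
  have hpk : (p : ℤ) ^ k = (p : ℤ) ^ v * (p : ℤ) ^ (k - v) := by
    rw [← pow_add]; congr 1; omega
  refine ⟨(d : ℤ) + (p : ℤ) ^ (k - v) * m, ?_, ?_⟩
  · have hx : x = (c : ℤ) + (p : ℤ) ^ k * m := by linarith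
    rw [hx, hdc, hpk]
    push_cast
    ring
  · intro hdvd
    have h1 : (p : ℤ) ∣ (p : ℤ) ^ (k - v) * m :=
      Dvd.dvd.mul_right (dvd_pow_self _ (by omega)) m
    have h2 : (p : ℤ) ∣ (d : ℤ) := by
      have := dvd_sub hdvd h1; simpa using this
    exact hpd (Int.natCast_dvd_natCast.mp (by exact_mod_cast h2))

private lemma cong_factor {q x j : ℕ} (hq : 0 < q) (hj : j < q) :
    (q : ℤ) ∣ ((x : ℤ) - j) - ((x % q + q - j) % q : ℕ) := by
  set l := x % q with hl
  have e1 := Nat.div_add_mod x q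
  have e2 := Nat.div_add_mod (l + q - j) q
  refine ⟨(x / q : ℕ) + ((l + q - j) / q : ℕ) - 1, ?_⟩
  have c1 : (q : ℤ) * (x / q : ℕ) + l = x := by exact_mod_cast e1
  have c2 : (q : ℤ) * ((l + q - j) / q : ℕ) + ((l + q - j) % q : ℕ) = (l : ℤ) + q - j := by
    have h3 : ((l + q - j : ℕ) : ℤ) = (l : ℤ) + q - j := by
      have h4 : j ≤ l + q := by omega
      push_cast [h4]; ring
    rw [← h3]; exact_mod_cast e2
  linear_combination -c1 - c2

private lemma diag_val (hp : p.Prime) (x : ℕ) :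
    ∃ u : ℤ, (∏ j ∈ (range (p ^ k)).erase (x % p ^ k), ((x : ℤ) - j)) =
      (p : ℤ) ^ (∑ c ∈ (range (p ^ k)).erase 0, c.factorization p) * u ∧ ¬ (p : ℤ) ∣ u := by
  have hq : 0 < p ^ k := pow_pos hp.pos k
  set q := p ^ k with hqdef
  set l := x % q with hldef
  have hl : l < q := Nat.mod_lt x hq
  set J := (range q).erase l with hJ
  set v : ℕ → ℕ := fun j => ((l + q - j) % q).factorization p with hv
  set w : ℕ → ℤ := fun j => ((x : ℤ) - j) / (p : ℤ) ^ (v j) with hwdef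
  have hpow0 : ∀ j, ((p : ℤ) ^ (v j)) ≠ 0 := fun j => pow_ne_zero _ (by exact_mod_cast hp.ne_zero)
  have key : ∀ j ∈ J, ((x : ℤ) - j) = (p : ℤ) ^ (v j) * w j ∧ ¬ (p : ℤ) ∣ w j := by
    intro j hj
    simp only [hJ, mem_erase, mem_range] at hj
    obtain ⟨hm1, hm2, _⟩ := mod_helper hl hj.2 hj.1
    have hcong : ((p : ℤ) ^ k) ∣ ((x : ℤ) - j) - (((l + q - j) % q : ℕ) : ℤ) := by
      have h := cong_factor hq hj.2 (x := x) (j := j)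
      rw [← hldef] at h
      have hqc : ((q : ℕ) : ℤ) = (p : ℤ) ^ k := by rw [hqdef]; push_cast; ring
      rw [← hqc]; exact h
    obtain ⟨w0, hw0, hw0'⟩ := val_factor hp hm1 hm2 hcong
    have hww : w j = w0 := by
      rw [show w j = ((x : ℤ) - j) / (p : ℤ) ^ (v j) from rfl, hw0,
        Int.mul_ediv_cancel_left _ (hpow0 j)]
    rw [hww]; exact ⟨hw0, hw0'⟩
  refine ⟨∏ j ∈ J, w j, ?_, ?_⟩
  · have hprod : ∏ j ∈ J, ((x : ℤ) - j) = ∏ j ∈ J, ((p : ℤ) ^ (v j) * w j) :=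
      Finset.prod_congr rfl (fun j hj => (key j hj).1)
    rw [hprod, Finset.prod_mul_distrib, Finset.prod_pow_eq_pow_sum]
    congr 2
    exact sum_val_bij hq hl (fun c => c.factorization p)
  · have hpZ : Prime (p : ℤ) := Int.prime_iff_natAbs_prime.mpr (by simpa using hp)
    intro hdvd
    rcases (Prime.dvd_finset_prod_iff hpZ w).mp hdvd with ⟨j, hj, hdj⟩
    exact (key j hj).2 hdj

private lemma offdiag_val (hp : p.Prime) {x r l : ℕ}
    (hr : r < p ^ k) (hl : l < p ^ k) (hne : l ≠ r) (hxl : x % p ^ k = l) :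
    ((p : ℤ) ^ ((∑ c ∈ (range (p ^ k)).erase 0, c.factorization p) + 1)) ∣
      ∏ j ∈ (range (p ^ k)).erase r, ((x : ℤ) - j) := by
  have hq : 0 < p ^ k := pow_pos hp.pos k
  have hk : 0 < k := by
    rcases Nat.eq_zero_or_pos k with h | h
    · subst h; simp at hr hl; omega
    · exact h
  set q := p ^ k with hqdef
  set D := ∑ c ∈ (range q).erase 0, c.factorization p with hD
  set v : ℕ → ℕ := fun j => ((l + q - j) % q).factorization p with hv
  have hlJ : l ∈ (range q).erase r := by simp [mem_erase, mem_range, hne, hl]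
  rw [← Finset.mul_prod_erase _ _ hlJ]
  -- first factor divisible by p^k
  have h1 : ((p : ℤ) ^ k) ∣ ((x : ℤ) - l) := by
    refine ⟨(x / q : ℕ), ?_⟩
    have e1 := Nat.div_add_mod x q
    rw [hxl] at e1
    have : (q : ℤ) * (x / q : ℕ) + l = x := by exact_mod_cast e1
    push_cast [hqdef] at this ⊢
    linarith
  -- remaining factors
  have h2 : ∀ j ∈ ((range q).erase r).erase l, ((p : ℤ) ^ (v j)) ∣ ((x : ℤ) - j) := by
    intro j hj
    simp only [mem_erase, mem_range] at hj
    obtain ⟨hjl, hjr, hjq⟩ := hj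
    have hcne : (l + q - j) % q ≠ 0 := (mod_helper hl hjq hjl).1
    have hvk : v j < k := fac_lt hcne (mod_helper hl hjq hjl).2.1
    have d1 : ((p : ℤ) ^ (v j)) ∣ (((l + q - j) % q : ℕ) : ℤ) := by
      exact_mod_cast Int.natCast_dvd_natCast.mpr (Nat.ordProj_dvd _ _)
    have d2 : ((p : ℤ) ^ (v j)) ∣ ((x : ℤ) - j) - (((l + q - j) % q : ℕ) : ℤ) := by
      have hc := cong_factor hq hjq (x := x) (j := j)
      rw [hxl] at hc
      have hqc : ((q : ℕ) : ℤ) = (p : ℤ) ^ k := by rw [hqdef]; push_cast; ring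
      rw [hqc] at hc
      exact dvd_trans (pow_dvd_pow (p : ℤ) hvk.le) hc
    have := dvd_add d2 d1
    simpa using this
  have h3 : (∏ j ∈ ((range q).erase r).erase l, ((p : ℤ) ^ (v j))) ∣
      ∏ j ∈ ((range q).erase r).erase l, ((x : ℤ) - j) :=
    Finset.prod_dvd_prod_of_dvd _ _ h2
  rw [Finset.prod_pow_eq_pow_sum] at h3
  -- compute the sum
  have hrJ : r ∈ (range q).erase l := by simp [mem_erase, mem_range, Ne.symm hne, hr]
  have hsum : v r + ∑ j ∈ ((range q).erase l).erase r, v j = D := by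
    rw [Finset.add_sum_erase _ _ hrJ, hD, ← sum_val_bij hq hl (fun c => c.factorization p)]
  have hvr : v r < k := by
    have := mod_helper hl hr (Ne.symm hne)
    exact fac_lt this.1 this.2.1
  have herase : ((range q).erase r).erase l = ((range q).erase l).erase r :=
    Finset.erase_right_comm
  rw [herase] at h3 ⊢
  have htot : ((p : ℤ) ^ (k + ∑ j ∈ ((range q).erase l).erase r, v j)) ∣
      ((x : ℤ) - l) * ∏ j ∈ ((range q).erase l).erase r, ((x : ℤ) - j) := by
    rw [pow_add]
    exact mul_dvd_mul h1 h3
  refine dvd_trans (pow_dvd_pow (p : ℤ) ?_) htot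
  omega

end
open Finset

section span
variable {n : ℕ} (F : Finset (Finset (Fin n)))

private def EE (S : Finset (Fin n)) : ↥F → ℚ :=
  fun B => if S ⊆ (B : Finset (Fin n)) then 1 else 0

private lemma EE_mul (S T : Finset (Fin n)) : EE F S * EE F T = EE F (S ∪ T) := by
  funext B
  simp only [EE, Pi.mul_apply, Finset.union_subset_iff]
  by_cases h1 : S ⊆ (B : Finset (Fin n)) <;> by_cases h2 : T ⊆ (B : Finset (Fin n)) <;>
    simp [h1, h2]

private lemma mul_mem_W {a b : ℕ} {f g : ↥F → ℚ}
    (hf : f ∈ Submodule.span ℚ (EE F '' {S : Finset (Fin n) | S.card ≤ a}))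
    (hg : g ∈ Submodule.span ℚ (EE F '' {S : Finset (Fin n) | S.card ≤ b})) :
    f * g ∈ Submodule.span ℚ (EE F '' {S : Finset (Fin n) | S.card ≤ a + b}) := by
  induction hf using Submodule.span_induction with
  | mem x hx =>
    obtain ⟨S, hS, rfl⟩ := hx
    induction hg using Submodule.span_induction with
    | mem y hy =>
      obtain ⟨T, hT, rfl⟩ := hy
      rw [EE_mul]
      exact Submodule.subset_span ⟨S ∪ T, by
        simp only [Set.mem_setOf_eq] at hS hT ⊢
        exact le_trans (Finset.card_union_le S T) (by omega), rfl⟩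
    | zero => simpa using Submodule.zero_mem _
    | add y z _ _ ihy ihz => rw [mul_add]; exact Submodule.add_mem _ ihy ihz
    | smul r y _ ihy => rw [Algebra.mul_smul_comm]; exact Submodule.smul_mem _ _ ihy
  | zero => simpa using Submodule.zero_mem _
  | add x y _ _ ihx ihy => rw [add_mul]; exact Submodule.add_mem _ ihx ihy
  | smul r x _ ihx => rw [Algebra.smul_mul_assoc]; exact Submodule.smul_mem _ _ ihx

private lemma factor_mem (A : Finset (Fin n)) (z : ℚ) :
    (fun B : ↥F => (((A ∩ (B : Finset (Fin n))).card : ℚ) - z)) ∈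
      Submodule.span ℚ (EE F '' {S : Finset (Fin n) | S.card ≤ 1}) := by
  have hfun : (fun B : ↥F => (((A ∩ (B : Finset (Fin n))).card : ℚ) - z)) =
      (∑ i ∈ A, EE F {i}) - z • EE F ∅ := by
    funext B
    simp only [Pi.sub_apply, Pi.smul_apply, Finset.sum_apply, EE]
    have h1 : ∀ i ∈ A, (if ({i} : Finset (Fin n)) ⊆ (B : Finset (Fin n)) then (1:ℚ) else 0)
        = if i ∈ (B : Finset (Fin n)) then 1 else 0 := by
      intro i _; simp [Finset.singleton_subset_iff]
    rw [Finset.sum_congr rfl h1, Finset.sum_boole]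
    rw [Finset.filter_mem_eq_inter]
    simp
  rw [hfun]
  refine Submodule.sub_mem _ (Submodule.sum_mem _ fun i _ => ?_) (Submodule.smul_mem _ _ ?_)
  · exact Submodule.subset_span ⟨{i}, by simp, rfl⟩
  · exact Submodule.subset_span ⟨∅, by simp, rfl⟩

private lemma prod_mem_W (J : Finset ℕ) (h : ℕ → (↥F → ℚ))
    (hh : ∀ j ∈ J, h j ∈ Submodule.span ℚ (EE F '' {S : Finset (Fin n) | S.card ≤ 1})) :
    (∏ j ∈ J, h j) ∈ Submodule.span ℚ (EE F '' {S : Finset (Fin n) | S.card ≤ J.card}) := by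
  induction J using Finset.induction with
  | empty =>
    rw [Finset.prod_empty]
    refine Submodule.subset_span ⟨∅, by simp, ?_⟩
    funext B; simp [EE]
  | @insert j J' hj ih =>
    rw [Finset.prod_insert hj, Finset.card_insert_of_notMem hj]
    have := mul_mem_W F (hh j (Finset.mem_insert_self _ _))
      (ih (fun i hi => hh i (Finset.mem_insert_of_mem hi)))
    rwa [add_comm 1 J'.card] at this

end span
theorem stmt_18 (n q s : ℕ) (hq : IsPrimePow q)
    (L : Finset ℕ) (hL : L ⊆ Finset.range q) (hLs : L.card = s)
    (F : Finset (Finset (Fin n)))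
    (havoid : ∀ A ∈ F, ¬ ∃ ℓ ∈ L, A.card ≡ ℓ [MOD q])
    (hinter : ∀ A ∈ F, ∀ B ∈ F, A ≠ B → ∃ ℓ ∈ L, (A ∩ B).card ≡ ℓ [MOD q]) :
    F.card ≤ ∑ i ∈ Finset.range q, n.choose i := by
  classical
  obtain ⟨p, k, hpp, hk, hqe⟩ := hq
  have hp : p.Prime := hpp.nat_prime
  subst hqe
  set q := p ^ k with hqdef
  have hq0 : 0 < q := pow_pos hp.pos k
  set D := ∑ c ∈ (range q).erase 0, c.factorization p with hD
  -- the integer matrix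
  set intf : Finset (Fin n) → Finset (Fin n) → ℤ := fun A B =>
    ∏ j ∈ (range q).erase (A.card % q), (((A ∩ B).card : ℤ) - j) with hintf
  set v : ↥F → (↥F → ℚ) := fun A B => ((intf (A : Finset (Fin n)) (B : Finset (Fin n)) : ℤ) : ℚ)
    with hvdef
  -- diagonal entries
  have hdiag : ∀ A ∈ F, ∃ u : ℤ, intf A A = (p : ℤ) ^ D * u ∧ ¬ (p : ℤ) ∣ u := by
    intro A _
    have h := diag_val (k := k) hp A.card
    rw [hintf]
    simpa [Finset.inter_self] using h
  -- off-diagonal entries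
  have hoff : ∀ A ∈ F, ∀ B ∈ F, A ≠ B → ((p : ℤ) ^ (D + 1)) ∣ intf A B := by
    intro A hA B hB hAB
    obtain ⟨ℓ, hℓL, hℓmod⟩ := hinter A hA B hB hAB
    have hℓq : ℓ < q := Finset.mem_range.mp (hL hℓL)
    have hxl : (A ∩ B).card % q = ℓ := by
      have := hℓmod
      unfold Nat.ModEq at this
      rw [this, Nat.mod_eq_of_lt hℓq]
    have hlr : ℓ ≠ A.card % q := by
      intro h
      exact havoid A hA ⟨ℓ, hℓL, by unfold Nat.ModEq; rw [Nat.mod_eq_of_lt hℓq, ← h]⟩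
    exact offdiag_val hp (Nat.mod_lt _ hq0) hℓq hlr hxl
  -- linear independence over ℤ
  have hindZ : LinearIndependent ℤ v := by
    rw [Fintype.linearIndependent_iff]
    intro g hrel
    by_contra hcon
    push_neg at hcon
    obtain ⟨A₁, hA₁⟩ := hcon
    set S : Finset ↥F := Finset.univ.filter (fun A => g A ≠ 0) with hS
    have hSne : S.Nonempty := ⟨A₁, by simp [hS, hA₁]⟩
    obtain ⟨A₀, hA₀S, hmin⟩ := S.exists_min_image (fun A => (g A).natAbs.factorization p) hSne
    have hgA₀ : g A₀ ≠ 0 := by simpa [hS] using hA₀S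
    set t := (g A₀).natAbs.factorization p with ht
    -- p^t divides all g A
    have hdvdall : ∀ A : ↥F, ((p : ℤ) ^ t) ∣ g A := by
      intro A
      by_cases h : g A = 0
      · simp [h]
      · have h1 : t ≤ (g A).natAbs.factorization p := hmin A (by simp [hS, h])
        have h2 : p ^ t ∣ (g A).natAbs :=
          dvd_trans (pow_dvd_pow p h1) (Nat.ordProj_dvd _ _)
        have h3 : ((p : ℤ) ^ t) ∣ ((g A).natAbs : ℤ) := by exact_mod_cast h2
        exact dvd_trans h3 (Int.natAbs_dvd.mpr dvd_rfl)
    -- decompose g A₀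
    have hdecomp : ∃ e : ℤ, g A₀ = (p : ℤ) ^ t * e ∧ ¬ (p : ℤ) ∣ e := by
      obtain ⟨d, hdc⟩ := Nat.ordProj_dvd (g A₀).natAbs p
      have hnz : (g A₀).natAbs ≠ 0 := by simpa using hgA₀
      have hpd : ¬ p ∣ d := by
        intro hdvd
        have h2 : p ^ (t + 1) ∣ (g A₀).natAbs := by
          rw [hdc, pow_succ]; exact mul_dvd_mul_left _ hdvd
        have := (Nat.Prime.pow_dvd_iff_le_factorization hp hnz).mp h2
        omega
      rcases Int.natAbs_eq (g A₀) with h | h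
      · exact ⟨d, by rw [h, hdc]; push_cast; ring, fun hc => hpd (by exact_mod_cast hc)⟩
      · refine ⟨-d, by rw [h, hdc]; push_cast; ring, fun hc => hpd ?_⟩
        have : (p : ℤ) ∣ (d : ℤ) := (dvd_neg.mp hc)
        exact_mod_cast this
    obtain ⟨e, he, hpe⟩ := hdecomp
    -- evaluate the relation at A₀
    have hrel0 : ∑ A : ↥F, g A * intf (A : Finset (Fin n)) (A₀ : Finset (Fin n)) = 0 := by
      have h1 := congrFun hrel A₀
      simp only [Finset.sum_apply, Pi.zero_apply, Pi.smul_apply, hvdef] at h1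
      have h2 : ((∑ A : ↥F, g A * intf (A : Finset (Fin n)) (A₀ : Finset (Fin n)) : ℤ) : ℚ)
          = 0 := by
        push_cast
        rw [← h1]
        refine Finset.sum_congr rfl fun A _ => ?_
        push_cast [zsmul_eq_mul]
        ring
      exact_mod_cast h2
    rw [← Finset.add_sum_erase _ _ (Finset.mem_univ A₀)] at hrel0
    have hkey : g A₀ * intf (A₀ : Finset (Fin n)) (A₀ : Finset (Fin n)) =
        - ∑ A ∈ Finset.univ.erase A₀, g A * intf (A : Finset (Fin n)) (A₀ : Finset (Fin n)) := by
      linarith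
    have hrhs : ((p : ℤ) ^ (t + (D + 1))) ∣
        g A₀ * intf (A₀ : Finset (Fin n)) (A₀ : Finset (Fin n)) := by
      rw [hkey]
      refine dvd_neg.mpr (Finset.dvd_sum fun A hA => ?_)
      have hAne : A ≠ A₀ := (Finset.mem_erase.mp hA).1
      have hAne' : (A : Finset (Fin n)) ≠ (A₀ : Finset (Fin n)) :=
        fun h => hAne (Subtype.coe_injective h)
      rw [pow_add]
      exact mul_dvd_mul (hdvdall A) (hoff _ A.2 _ A₀.2 hAne')
    obtain ⟨u, hu, hpu⟩ := hdiag (A₀ : Finset (Fin n)) A₀.2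
    rw [hu, he] at hrhs
    have heq : (p : ℤ) ^ t * e * ((p : ℤ) ^ D * u) = (p : ℤ) ^ (t + D) * (e * u) := by
      rw [pow_add]; ring
    rw [heq] at hrhs
    obtain ⟨m, hm⟩ := hrhs
    have hm' : (p : ℤ) ^ (t + D) * (e * u) = (p : ℤ) ^ (t + D) * ((p : ℤ) * m) := by
      rw [hm, pow_add, pow_add]; ring
    have hpne : ((p : ℤ) ^ (t + D)) ≠ 0 := pow_ne_zero _ (by exact_mod_cast hp.ne_zero)
    have hEU : e * u = (p : ℤ) * m := mul_left_cancel₀ hpne hm'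
    have hpZ : Prime (p : ℤ) := Int.prime_iff_natAbs_prime.mpr (by simpa using hp)
    rcases (hpZ.dvd_mul).mp ⟨m, hEU⟩ with h | h
    · exact hpe h
    · exact hpu h
  -- upgrade to ℚ
  have hindQ : LinearIndependent ℚ v := (LinearIndependent.iff_fractionRing ℤ ℚ).mp hindZ
  -- span membership
  have hmem : ∀ A : ↥F, v A ∈
      Submodule.span ℚ (EE F '' {S : Finset (Fin n) | S.card ≤ q - 1}) := by
    intro A
    have hAq : (A : Finset (Fin n)).card % q < q := Nat.mod_lt _ hq0
    have hveq : v A = ∏ j ∈ (range q).erase ((A : Finset (Fin n)).card % q),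
        (fun B : ↥F => ((((A : Finset (Fin n)) ∩ (B : Finset (Fin n))).card : ℚ) - (j : ℚ))) := by
      funext B
      rw [Finset.prod_apply]
      simp only [hvdef, hintf]
      push_cast
      rfl
    rw [hveq]
    have hcard : ((range q).erase ((A : Finset (Fin n)).card % q)).card = q - 1 := by
      rw [Finset.card_erase_of_mem (Finset.mem_range.mpr hAq), Finset.card_range]
    rw [← hcard]
    exact prod_mem_W F _ _ (fun j _ => factor_mem F _ _)
  -- counting
  set T : Finset (Finset (Fin n)) :=
    (range q).biUnion (fun i => Finset.powersetCard i (Finset.univ : Finset (Fin n))) with hT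
  have hTmem : ∀ S : Finset (Fin n), S ∈ T ↔ S.card < q := by
    intro S
    simp only [hT, Finset.mem_biUnion, Finset.mem_range, Finset.mem_powersetCard_univ]
    exact ⟨fun ⟨i, hi, he⟩ => he ▸ hi, fun h => ⟨S.card, h, rfl⟩⟩
  have hsetT : {S : Finset (Fin n) | S.card ≤ q - 1} = ↑T := by
    ext S
    simp only [Set.mem_setOf_eq, Finset.coe_mem, Finset.mem_coe, hTmem]
    omega
  have hspan : Set.range v ≤ Submodule.span ℚ ((↑(T.image (EE F)) : Set (↥F → ℚ))) := by
    rintro _ ⟨A, rfl⟩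
    have := hmem A
    rwa [hsetT, ← Finset.coe_image] at this
  have hcount := linearIndependent_le_span_aux' v hindQ _ hspan
  have hTcard : T.card = ∑ i ∈ Finset.range q, n.choose i := by
    rw [hT, Finset.card_biUnion]
    · refine Finset.sum_congr rfl fun i _ => ?_
      rw [Finset.card_powersetCard, Finset.card_univ, Fintype.card_fin]
    · intro x _ y _ hxy
      rw [Function.onFun, Finset.disjoint_left]
      intro S hSx hSy
      rw [Finset.mem_powersetCard_univ] at hSx hSy
      exact hxy (hSx ▸ hSy)
  calc F.card = Fintype.card ↥F := (Fintype.card_coe F).symm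
    _ ≤ Fintype.card (↑(T.image (EE F)) : Set (↥F → ℚ)) := hcount
    _ = (T.image (EE F)).card := by
        simp only [Finset.coe_sort_coe, Fintype.card_coe]
    _ ≤ T.card := Finset.card_image_le
    _ = ∑ i ∈ Finset.range q, n.choose i := hTcard
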